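/- Let f be a +proper closed relation on a locally compact, σ-compact Hausdorff space X, let X̂ be a compact Hausdorff space containing X as a dense open subspace, and let f̂ be the closure of f in X̂ × X̂. Assume the compactification is almost dynamic: (1_{X̂} ∪ 𝒢f̂) ∩ (X × X) = 1_X ∪ 𝒢f. Then: (a) if C ⊆ X is compact and 𝒢f(C) ∩ (𝒢f)⁻¹(C) ⊆ C, then 𝒢f̂(C) ∩ (𝒢f̂)⁻¹(C) ⊆ C; (b) if C ⊆ X is compact and 𝒢f(C) ⊆ C, then 𝒢f̂(C) ⊆ C. -/
import Mathlib


/-- The image of a set `A` under a relation `f ⊆ X × Y`. -/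
def relImage {X Y : Type*} (f : Set (X × Y)) (A : Set X) : Set Y :=
  {y | ∃ x ∈ A, (x, y) ∈ f}

/-- The reverse (inverse) relation of `f ⊆ X × Y`. -/
def relInv {X Y : Type*} (f : Set (X × Y)) : Set (Y × X) :=
  {p | (p.2, p.1) ∈ f}

/-- Composition of relations: `relComp g f = g ∘ f` (first `f`, then `g`). -/
def relComp {X Y Z : Type*} (g : Set (Y × Z)) (f : Set (X × Y)) : Set (X × Z) :=
  {p | ∃ y, (p.1, y) ∈ f ∧ (y, p.2) ∈ g}

/-- A relation on `X` is transitive. -/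
def RelTrans {X : Type*} (f : Set (X × X)) : Prop :=
  ∀ x y z : X, (x, y) ∈ f → (y, z) ∈ f → (x, z) ∈ f

/-- `gRel f` is the smallest closed transitive relation containing `f`:
the intersection of all closed transitive relations containing `f`. -/
def gRel {X : Type*} [TopologicalSpace X] (f : Set (X × X)) : Set (X × X) :=
  ⋂₀ {g : Set (X × X) | f ⊆ g ∧ IsClosed g ∧ RelTrans g}

lemma subset_gRel {X : Type*} [TopologicalSpace X] (f : Set (X × X)) : f ⊆ gRel f :=
  fun p hp => Set.mem_sInter.2 fun _ hg => hg.1 hp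

lemma gRel_le {X : Type*} [TopologicalSpace X] {f g : Set (X × X)}
    (h1 : f ⊆ g) (h2 : IsClosed g) (h3 : RelTrans g) : gRel f ⊆ g :=
  Set.sInter_subset_of_mem ⟨h1, h2, h3⟩

lemma gRel_closed {X : Type*} [TopologicalSpace X] (f : Set (X × X)) : IsClosed (gRel f) :=
  isClosed_sInter fun _ hg => hg.2.1

lemma gRel_trans {X : Type*} [TopologicalSpace X] (f : Set (X × X)) : RelTrans (gRel f) := by
  intro x y z hxy hyz
  refine Set.mem_sInter.2 fun g hg => ?_
  exact hg.2.2 x y z (Set.mem_sInter.1 hxy g hg) (Set.mem_sInter.1 hyz g hg)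

/-- Let `f` be a +proper closed relation on a locally compact, σ-compact
Hausdorff space `X`, embedded as a dense open subspace of a compact Hausdorff `X̂`,
and let `f̂` be the closure of `f` in `X̂ × X̂`.  If the compactification is almost
dynamic, then: (a) every compact `𝒢f`-unrevisited subset of `X` is `𝒢f̂`-unrevisited;
(b) every compact `𝒢f`-+invariant subset of `X` is `𝒢f̂`-+invariant. -/
theorem almostDynamic_unrevisited_and_invariant
    {X : Type*} [TopologicalSpace X] [LocallyCompactSpace X]
    [SigmaCompactSpace X] [T2Space X]
    {Xh : Type*} [TopologicalSpace Xh] [CompactSpace Xh] [T2Space Xh]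
    (j : X → Xh) (hj : Topology.IsEmbedding j)
    (hopen : IsOpen (Set.range j)) (hdense : Dense (Set.range j))
    (f : Set (X × X)) (hf : IsClosed f)
    (hplus : ∀ A : Set X, IsCompact A → IsCompact (relImage f A))
    (fh : Set (Xh × Xh)) (hfh : fh = closure (Prod.map j j '' f))
    (had : ∀ x y : X,
      ((j x, j y) ∈ Set.diagonal Xh ∪ gRel fh) ↔ ((x, y) ∈ Set.diagonal X ∪ gRel f)) :
    (∀ C : Set X, IsCompact C →
      relImage (gRel f) C ∩ relImage (relInv (gRel f)) C ⊆ C →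
      relImage (gRel fh) (j '' C) ∩ relImage (relInv (gRel fh)) (j '' C) ⊆ j '' C) ∧
    (∀ C : Set X, IsCompact C → relImage (gRel f) C ⊆ C →
      relImage (gRel fh) (j '' C) ⊆ j '' C) := by
  have hjc : Continuous j := hj.continuous
  have hjinj : Function.Injective j := hj.injective
  have hjopen : IsOpenMap j := hj.isInducing.isOpenMap hopen
  -- consequence of the almost dynamic hypothesis
  have hadG : ∀ x y : X, (j x, j y) ∈ gRel fh → x = y ∨ (x, y) ∈ gRel f := by
    intro x y h
    have h' := (had x y).1 (Set.mem_union_right _ h)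
    rcases h' with h' | h'
    · exact Or.inl h'
    · exact Or.inr h'
  -- KEY LEMMA: if `c₁ ∈ C` (compact) and `(j c₁, z) ∈ 𝒢f̂` with `z` at infinity,
  -- then the arrow factors through a point `w ∉ C` of `X` with `(c₁, w) ∈ 𝒢f`
  -- and `(j w, z) ∈ 𝒢f̂`.
  have key : ∀ (C : Set X), IsCompact C → ∀ z c₁, c₁ ∈ C → (j c₁, z) ∈ gRel fh →
      z ∉ Set.range j → ∃ w, w ∉ C ∧ (c₁, w) ∈ gRel f ∧ (j w, z) ∈ gRel fh := by
    intro C hC z c₁ hc₁ hpair hz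
    obtain ⟨K₁, hK₁, hCK₁⟩ := exists_compact_superset hC
    set U : Set X := interior K₁ with hUdef
    have hUopen : IsOpen U := isOpen_interior
    set K : Set X := K₁ ∪ relImage f K₁ with hKdef
    have hKc : IsCompact K := hK₁.union (hplus K₁ hK₁)
    set Sh : Set X := K \ U with hShdef
    have hShc : IsCompact Sh := hKc.diff hUopen
    have hjUopen : IsOpen (j '' U) := hjopen _ hUopen
    have hjKcpt : IsCompact (j '' K) := hKc.image hjc
    have hjKclosed : IsClosed (j '' K) := hjKcpt.isClosed
    have hjShclosed : IsClosed (j '' Sh) := (hShc.image hjc).isClosed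
    -- the "two-step through the shell" relation
    set Q : Set (Xh × Xh) :=
      {pq | ∃ m ∈ j '' Sh, (pq.1, m) ∈ gRel fh ∧ (m, pq.2) ∈ gRel fh} with hQdef
    have hQclosed : IsClosed Q := by
      have hR : IsClosed {x : (Xh × Xh) × Xh |
          x.2 ∈ j '' Sh ∧ (x.1.1, x.2) ∈ gRel fh ∧ (x.2, x.1.2) ∈ gRel fh} := by
        refine (hjShclosed.preimage continuous_snd).inter
          (IsClosed.inter ?_ ?_)
        · exact (gRel_closed fh).preimage
            ((continuous_fst.fst).prodMk continuous_snd)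
        · exact (gRel_closed fh).preimage
            (continuous_snd.prodMk (continuous_fst.snd))
      have hQeq : Q = (fun x : (Xh × Xh) × Xh => x.1) '' {x : (Xh × Xh) × Xh |
          x.2 ∈ j '' Sh ∧ (x.1.1, x.2) ∈ gRel fh ∧ (x.2, x.1.2) ∈ gRel fh} := by
        ext pq
        constructor
        · rintro ⟨m, hm, h1, h2⟩
          exact ⟨(pq, m), ⟨hm, h1, h2⟩, rfl⟩
        · rintro ⟨⟨pq', m⟩, ⟨hm, h1, h2⟩, rfl⟩
          exact ⟨m, hm, h1, h2⟩
      rw [hQeq]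
      exact (hR.isCompact.image continuous_fst).isClosed
    -- the test relation T
    set T : Set (Xh × Xh) := gRel fh ∩
      ({pq : Xh × Xh | pq.1 ∉ j '' U} ∪ {pq : Xh × Xh | pq.2 ∈ j '' K} ∪ Q) with hTdef
    have hTclosed : IsClosed T := by
      refine (gRel_closed fh).inter (IsClosed.union (IsClosed.union ?_ ?_) hQclosed)
      · exact (hjUopen.preimage continuous_fst).isClosed_compl
      · exact hjKclosed.preimage continuous_snd
    -- the properness splitting lemma: fh-arrows from j''U land in j''K
    have hsplit : ∀ p q : Xh, (p, q) ∈ fh → p ∈ j '' U → q ∈ j '' K := by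
      intro p q hpq hpU
      rw [hfh] at hpq
      have hcov : Prod.map j j '' f ⊆
          ((j '' K₁) ×ˢ (j '' relImage f K₁)) ∪ ((j '' Uᶜ) ×ˢ (Set.univ : Set Xh)) := by
        rintro ⟨a, b⟩ ⟨⟨x, y⟩, hxy, heq⟩
        have ha : j x = a := congrArg Prod.fst heq
        have hb : j y = b := congrArg Prod.snd heq
        by_cases hx : x ∈ K₁
        · exact Or.inl ⟨⟨x, hx, ha⟩, ⟨y, ⟨x, hx, hxy⟩, hb⟩⟩
        · exact Or.inr ⟨⟨x, fun hxU => hx (interior_subset hxU), ha⟩, trivial⟩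
      have h1closed : IsClosed ((j '' K₁) ×ˢ (j '' relImage f K₁)) :=
        ((hK₁.image hjc).prod ((hplus K₁ hK₁).image hjc)).isClosed
      have hclos : (p, q) ∈ closure (((j '' K₁) ×ˢ (j '' relImage f K₁)) ∪
          ((j '' Uᶜ) ×ˢ (Set.univ : Set Xh))) := closure_mono hcov hpq
      rw [closure_union, h1closed.closure_eq] at hclos
      rcases hclos with h | h
      · obtain ⟨y, hy, hyq⟩ := h.2
        exact ⟨y, Or.inr hy, hyq⟩
      · exfalso
        have hsub : closure ((j '' Uᶜ) ×ˢ (Set.univ : Set Xh)) ⊆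
            (closure (j '' Uᶜ)) ×ˢ (Set.univ : Set Xh) :=
          closure_minimal (Set.prod_mono subset_closure subset_rfl)
            (isClosed_closure.prod isClosed_univ)
        have hp' : p ∈ closure (j '' Uᶜ) := (hsub h).1
        obtain ⟨t, htU, htUc⟩ := mem_closure_iff.1 hp' (j '' U) hjUopen hpU
        obtain ⟨u, hu, hut⟩ := htU
        obtain ⟨v, hv, hvt⟩ := htUc
        exact hv (hjinj (hvt.trans hut.symm) ▸ hu)
    have hfhT : fh ⊆ T := by
      rintro ⟨p, q⟩ hpq
      refine ⟨subset_gRel fh hpq, ?_⟩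
      by_cases hp : p ∈ j '' U
      · exact Or.inl (Or.inr (hsplit p q hpq hp))
      · exact Or.inl (Or.inl hp)
    have hTtrans : RelTrans T := by
      intro p q r hpq hqr
      refine ⟨gRel_trans fh p q r hpq.1 hqr.1, ?_⟩
      by_cases hp : p ∈ j '' U
      · by_cases hr : r ∈ j '' K
        · exact Or.inl (Or.inr hr)
        · refine Or.inr ?_
          rcases hpq.2 with (h | h) | h
          · exact absurd hp h
          · -- q ∈ j '' K
            obtain ⟨y, hyK, rfl⟩ := h
            by_cases hyU : y ∈ U
            · rcases hqr.2 with (h' | h') | h'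
              · exact absurd ⟨y, hyU, rfl⟩ h'
              · exact absurd h' hr
              · obtain ⟨m, hm, h1, h2⟩ := h'
                exact ⟨m, hm, gRel_trans fh p (j y) m hpq.1 h1, h2⟩
            · exact ⟨j y, ⟨y, ⟨hyK, hyU⟩, rfl⟩, hpq.1, hqr.1⟩
          · obtain ⟨m, hm, h1, h2⟩ := h
            exact ⟨m, hm, h1, gRel_trans fh m q r h2 hqr.1⟩
      · exact Or.inl (Or.inl hp)
    have hGT : gRel fh ⊆ T := gRel_le hfhT hTclosed hTtrans
    -- apply T to the given pair
    have hmem := hGT hpair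
    have hp : j c₁ ∈ j '' U := ⟨c₁, hCK₁ hc₁, rfl⟩
    have hq : z ∉ j '' K := fun ⟨w, _, e⟩ => hz ⟨w, e⟩
    rcases hmem.2 with (h | h) | h
    · exact absurd hp h
    · exact absurd h hq
    · obtain ⟨m, ⟨w, hwSh, rfl⟩, h1, h2⟩ := h
      have hwU : w ∉ U := hwSh.2
      have hwC : w ∉ C := fun hwC' => hwU (hCK₁ hwC')
      rcases hadG c₁ w h1 with rfl | hcw
      · exact absurd (hCK₁ hc₁) hwU
      · exact ⟨w, hwC, hcw, h2⟩
  constructor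
  · -- part (a): unrevisited
    intro C hC hunrev z hz
    obtain ⟨hz1, hz2⟩ := hz
    obtain ⟨p₁, hp₁, hpair₁⟩ := hz1
    obtain ⟨c₁, hc₁, rfl⟩ := hp₁
    obtain ⟨p₂, hp₂, hpair₂⟩ := hz2
    obtain ⟨c₂, hc₂, rfl⟩ := hp₂
    -- hpair₂ : (j c₂, z) ∈ relInv (gRel fh), i.e. (z, j c₂) ∈ gRel fh
    have hpair₂' : (z, j c₂) ∈ gRel fh := hpair₂
    by_cases hzr : z ∈ Set.range j
    · obtain ⟨y, rfl⟩ := hzr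
      rcases hadG c₁ y hpair₁ with rfl | h1
      · exact ⟨c₁, hc₁, rfl⟩
      · rcases hadG y c₂ hpair₂' with rfl | h2
        · exact ⟨y, hc₂, rfl⟩
        · exact ⟨y, hunrev ⟨⟨c₁, hc₁, h1⟩, ⟨c₂, hc₂, h2⟩⟩, rfl⟩
    · exfalso
      obtain ⟨w, hwC, hcw, hwz⟩ := key C hC z c₁ hc₁ hpair₁ hzr
      have h2 : (j w, j c₂) ∈ gRel fh := gRel_trans fh _ _ _ hwz hpair₂'
      rcases hadG w c₂ h2 with rfl | hwc₂
      · exact hwC hc₂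
      · exact hwC (hunrev ⟨⟨c₁, hc₁, hcw⟩, ⟨c₂, hc₂, hwc₂⟩⟩)
  · -- part (b): +invariant
    intro C hC hinv z hz
    obtain ⟨p, hp, hpair⟩ := hz
    obtain ⟨c, hc, rfl⟩ := hp
    by_cases hzr : z ∈ Set.range j
    · obtain ⟨y, rfl⟩ := hzr
      rcases hadG c y hpair with rfl | hcy
      · exact ⟨c, hc, rfl⟩
      · exact ⟨y, hinv ⟨c, hc, hcy⟩, rfl⟩
    · exfalso
      obtain ⟨w, hwC, hcw, -⟩ := key C hC z c hc hpair hzr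
      exact hwC (hinv ⟨c, hc, hcw⟩)
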